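/- Let Q_1, …, Q_r (r ≥ 2) be nonempty finite sets in a real inner product space and let D = diam(Q_1, …, Q_r) be the maximum distance ‖x − y‖ over pairs x ∈ Q_i, y ∈ Q_j with i ≠ j. Then there exist an index j ∈ {1,…,r} and a closed ball of radius D/√2 that covers Q_j. -/

import Mathlib

lemma norm_sub_smul_sq {E : Type*} [NormedAddCommGroup E] [InnerProductSpace ℝ E]
    (a b : E) (t : ℝ) :
    ‖a - t • b‖ ^ 2 = ‖a‖ ^ 2 - 2 * t * (inner ℝ b a : ℝ) + t ^ 2 * ‖b‖ ^ 2 := by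
  rw [norm_sub_sq_real, real_inner_smul_right, norm_smul, real_inner_comm a b, mul_pow]
  simp only [Real.norm_eq_abs, sq_abs]
  ring

/-- Key variational lemma: if `c` minimizes the max distance to `Q` over a convex set `K`,
then for any `y ∈ K` there is a farthest point `x` of `Q` with `⟪y - c, x - c⟫ ≤ 0`. -/
lemma jung_key {E : Type*} [NormedAddCommGroup E] [InnerProductSpace ℝ E]
    (Q : Finset E) (hQ : Q.Nonempty) (K : Set E) (hK : Convex ℝ K)
    (c : E) (hc : c ∈ K)
    (hmin : ∀ z ∈ K, (Q.sup' hQ fun x => dist x c) ≤ Q.sup' hQ fun x => dist x z)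
    (y : E) (hy : y ∈ K) :
    ∃ x ∈ Q, dist x c = (Q.sup' hQ fun x => dist x c) ∧ (inner ℝ (y - c) (x - c) : ℝ) ≤ 0 := by
  set R : ℝ := Q.sup' hQ fun x => dist x c with hR
  by_contra hcon
  push_neg at hcon
  -- all farthest points have positive inner product with y - c
  have hfar : ∀ x ∈ Q, dist x c = R → 0 < (inner ℝ (y - c) (x - c) : ℝ) := by
    intro x hx hxR
    have := hcon x hx hxR
    linarith
  have hyc : y ≠ c := by
    intro h
    obtain ⟨x, hx, hxR⟩ := Q.exists_mem_eq_sup' hQ (fun x => dist x c)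
    have h2 := hfar x hx hxR.symm
    rw [h, sub_self] at h2
    simp at h2
  set n : ℝ := ‖y - c‖ ^ 2 with hn
  have hn0 : 0 < n := by
    have h0 : y - c ≠ 0 := sub_ne_zero.2 hyc
    have h1 : 0 < ‖y - c‖ := norm_pos_iff.2 h0
    rw [hn]
    exact pow_pos h1 2
  set α : E → ℝ := fun x => (inner ℝ (y - c) (x - c) : ℝ) with hα
  set δ : E → ℝ := fun x =>
    if dist x c = R then α x / n else (R ^ 2 - dist x c ^ 2) / (2 * (2 * |α x| + n)) with hδ
  have hδpos : ∀ x ∈ Q, 0 < δ x := by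
    intro x hx
    by_cases h : dist x c = R
    · simp only [hδ, h, if_pos rfl]
      exact div_pos (hfar x hx h) hn0
    · have hlt : dist x c < R := lt_of_le_of_ne (Q.le_sup' (fun x => dist x c) hx) h
      have hd0 : (0:ℝ) ≤ dist x c := dist_nonneg
      simp only [hδ, if_neg h]
      apply div_pos
      · nlinarith
      · positivity
  set t : ℝ := min 1 (Q.inf' hQ δ) with ht
  have ht0 : 0 < t := lt_min one_pos ((Finset.lt_inf'_iff hQ).2 hδpos)
  have ht1 : t ≤ 1 := min_le_left _ _
  have htδ : ∀ x ∈ Q, t ≤ δ x := fun x hx =>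
    le_trans (min_le_right _ _) (Finset.inf'_le δ hx)
  set z : E := c + t • (y - c) with hz
  have hzK : z ∈ K := by
    have := hK hc hy (by linarith : (0:ℝ) ≤ 1 - t) (le_of_lt ht0) (by ring)
    convert this using 1
    rw [hz]
    module
  have hdist : ∀ x ∈ Q, dist x z < R := by
    intro x hx
    have hcalc : dist x z ^ 2 = dist x c ^ 2 - 2 * t * α x + t ^ 2 * n := by
      have hxz : x - z = (x - c) - t • (y - c) := by rw [hz]; abel
      rw [dist_eq_norm, hxz, norm_sub_smul_sq, ← dist_eq_norm]
    have hsq : dist x z ^ 2 < R ^ 2 := by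
      by_cases h : dist x c = R
      · have hαpos := hfar x hx h
        have htn : t * n ≤ α x := by
          have h3 := htδ x hx
          simp only [hδ, if_pos h] at h3
          calc t * n ≤ (α x / n) * n := by nlinarith
            _ = α x := by field_simp
        rw [hcalc, h]
        nlinarith
      · have hlt : dist x c < R := lt_of_le_of_ne (Q.le_sup' (fun x => dist x c) hx) h
        have hd0 : (0:ℝ) ≤ dist x c := dist_nonneg
        have h3 := htδ x hx
        simp only [hδ, if_neg h] at h3
        have hden : (0:ℝ) < 2 * (2 * |α x| + n) := by positivity
        have h1 : t * (2 * (2 * |α x| + n)) ≤ R ^ 2 - dist x c ^ 2 := by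
          rw [← le_div_iff₀ hden]; exact h3
        have habs : -|α x| ≤ α x := neg_abs_le _
        have habs2 : α x ≤ |α x| := le_abs_self _
        have hd2 : dist x c ^ 2 < R ^ 2 := by nlinarith
        have htn : t ^ 2 * n ≤ t * n := by
          nlinarith [mul_nonneg (mul_nonneg ht0.le hn0.le) (sub_nonneg.2 ht1)]
        have hta : -(2 * t * α x) ≤ 2 * t * |α x| := by nlinarith
        rw [hcalc]
        nlinarith
    have hR0 : 0 ≤ R := le_trans dist_nonneg (Q.le_sup' (fun x => dist x c) hx)
    nlinarith [dist_nonneg (x := x) (y := z)]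
  have h1 : (Q.sup' hQ fun x => dist x z) < R := (Finset.sup'_lt_iff hQ).2 hdist
  have h2 := hmin z hzK
  linarith

/-- **Colorful no-dimensional Jung theorem** (Akopyan). For nonempty finite sets
`Q_1, …, Q_r` (`r ≥ 2`) in a real inner product space, letting
`D = diam(Q_1, …, Q_r)` be the maximum distance between points of distinct sets,
there is a closed ball of radius `D/√2` covering one of the sets `Q_j`. -/
theorem colorful_no_dimensional_jung
    {E : Type*} [NormedAddCommGroup E] [InnerProductSpace ℝ E]
    (r : ℕ) (hr : 2 ≤ r)
    (Q : Fin r → Finset E) (hne : ∀ i, (Q i).Nonempty)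
    (D : ℝ)
    (hD : D = sSup {d : ℝ | ∃ i j, i ≠ j ∧ ∃ x ∈ Q i, ∃ y ∈ Q j, d = dist x y}) :
    ∃ (j : Fin r) (c : E), ∀ x ∈ Q j, dist x c ≤ D / Real.sqrt 2 := by
  classical
  set S : Finset E := Finset.univ.biUnion Q with hS
  set K : Set E := convexHull ℝ (S : Set E) with hK
  have hKcv : Convex ℝ K := convex_convexHull ℝ _
  have hKcp : IsCompact K := S.finite_toSet.isCompact_convexHull ℝ
  have hQK : ∀ i, ∀ x ∈ Q i, x ∈ K := by
    intro i x hx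
    apply subset_convexHull ℝ (S : Set E)
    simp only [hS, Finset.coe_biUnion, Finset.mem_coe, Set.mem_iUnion]
    exact ⟨i, Finset.mem_univ i, hx⟩
  have hKne : K.Nonempty := by
    obtain ⟨x, hx⟩ := hne ⟨0, by omega⟩
    exact ⟨x, hQK _ x hx⟩
  -- Chebyshev centers over K for each set
  have hex : ∀ i : Fin r, ∃ c ∈ K, ∀ z ∈ K,
      ((Q i).sup' (hne i) fun x => dist x c) ≤ (Q i).sup' (hne i) fun x => dist x z := by
    intro i
    have hcont : ContinuousOn (fun z => (Q i).sup' (hne i) fun x => dist x z) K :=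
      (Continuous.finset_sup'_apply (hne i)
        (fun x _ => continuous_const.dist continuous_id)).continuousOn
    obtain ⟨c, hcK, hc⟩ := hKcp.exists_isMinOn hKne hcont
    exact ⟨c, hcK, fun z hz => hc hz⟩
  choose c hcK hcmin using hex
  set Rf : Fin r → ℝ := fun i => (Q i).sup' (hne i) fun x => dist x (c i) with hRf
  obtain ⟨j, -, hjmin⟩ := Finset.exists_min_image Finset.univ Rf ⟨⟨0, by omega⟩, Finset.mem_univ _⟩
  refine ⟨j, c j, fun x hx => ?_⟩
  have hxR : dist x (c j) ≤ Rf j := by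
    rw [hRf]; exact Finset.le_sup' (fun x => dist x (c j)) hx
  suffices hRD : Rf j ≤ D / Real.sqrt 2 by linarith
  by_contra hcontra
  push_neg at hcontra
  -- basic facts about D
  have hfin : {d : ℝ | ∃ i j, i ≠ j ∧ ∃ x ∈ Q i, ∃ y ∈ Q j, d = dist x y}.Finite := by
    apply Set.Finite.subset (Set.Finite.image (fun p : E × E => dist p.1 p.2)
      (Set.Finite.prod S.finite_toSet S.finite_toSet))
    rintro d ⟨i, j', hij, x, hx, y, hy, rfl⟩
    exact ⟨(x, y), ⟨by simpa [hS] using ⟨i, hx⟩, by simpa [hS] using ⟨j', hy⟩⟩, rfl⟩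
  have hDle : ∀ (i k : Fin r), i ≠ k → ∀ x ∈ Q i, ∀ y ∈ Q k, dist x y ≤ D := by
    intro i k hik x hx y hy
    rw [hD]
    exact le_csSup hfin.bddAbove ⟨i, k, hik, x, hx, y, hy, rfl⟩
  -- pick another color
  have : Nontrivial (Fin r) := Fin.nontrivial_iff_two_le.2 hr
  obtain ⟨k, hk⟩ := exists_ne j
  -- every point of Q k is strictly inside the ball B(c j, Rf j)
  have hyall : ∀ y ∈ Q k, dist y (c j) < Rf j := by
    intro y hy
    obtain ⟨x0, hx0, hx0R, hx0inner⟩ :=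
      jung_key (Q j) (hne j) K hKcv (c j) (hcK j) (hcmin j) y (hQK k y hy)
    have hDxy : dist x0 y ≤ D := hDle j k hk.symm x0 hx0 y hy
    have hgeom : dist y (c j) ^ 2 + Rf j ^ 2 ≤ dist x0 y ^ 2 := by
      have h1 : ‖x0 - y‖ ^ 2 = ‖x0 - c j‖ ^ 2 - 2 * (inner ℝ (x0 - c j) (y - c j) : ℝ)
          + ‖y - c j‖ ^ 2 := by
        have hxy : x0 - y = (x0 - c j) - (y - c j) := by abel
        rw [hxy, norm_sub_sq_real]
      have h2 : (inner ℝ (x0 - c j) (y - c j) : ℝ) ≤ 0 := by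
        rw [real_inner_comm]; exact hx0inner
      have h3 : ‖x0 - c j‖ = Rf j := by rw [← dist_eq_norm]; exact hx0R
      rw [dist_eq_norm, dist_eq_norm, h1, h3]
      nlinarith
    -- from D/√2 < Rf j deduce D^2 < 2 * Rf j ^ 2
    have hs2 : (0:ℝ) < Real.sqrt 2 := Real.sqrt_pos.2 (by norm_num)
    have hD0 : 0 ≤ D := le_trans dist_nonneg hDxy
    have hDR : D < Rf j * Real.sqrt 2 := by
      have := (div_lt_iff₀ hs2).1 hcontra
      linarith
    have hDsq : D ^ 2 < 2 * Rf j ^ 2 := by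
      have h4 : Real.sqrt 2 ^ 2 = 2 := Real.sq_sqrt (by norm_num)
      nlinarith
    have hRf0 : 0 < Rf j := lt_of_le_of_lt (div_nonneg hD0 hs2.le) hcontra
    have hxy2 : dist x0 y ^ 2 ≤ D ^ 2 := pow_le_pow_left₀ dist_nonneg hDxy 2
    have hsq : dist y (c j) ^ 2 < Rf j ^ 2 := by nlinarith
    nlinarith [dist_nonneg (x := y) (y := c j)]
  have h1 : ((Q k).sup' (hne k) fun y => dist y (c j)) < Rf j :=
    (Finset.sup'_lt_iff (hne k)).2 hyall
  have h2 : Rf k ≤ (Q k).sup' (hne k) fun y => dist y (c j) := hcmin k (c j) (hcK j)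
  have h3 : Rf j ≤ Rf k := hjmin k (Finset.mem_univ k)
  linarith
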